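/- Consider the online process where at each round t the learner receives x_t, outputs ŷ_t = argmax_y Σ_{σ: y∈σ(x_t)} w^t(σ), receives y_t, then zeroes weights of σ with y_t ∉ σ(x_t) and doubles weights of σ with y_t ∈ σ(x_t) and ŷ_t ∉ σ(x_t). If there exists σ* ∈ S with y_t ∈ σ*(x_t) for all t, then over any number of rounds the number of indices t with ŷ_t ∉ σ*(x_t) is at most log₂|S|. -/
import Mathlib


/-- Mistake bound log₂|S| for the mistake-unaware weight-update rule. -/
theorem stmt1 {H X Y : Type*} [Fintype H] [Nonempty H] [DecidableEq Y]
    (σ : H → X → Finset Y) (x : ℕ → X) (y : ℕ → Y) (yhat : ℕ → Y)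
    (w : ℕ → H → ℝ)
    (hw1 : ∀ h, w 0 h = 1)
    (hmax : ∀ t (z : Y), ∑ h ∈ Finset.univ.filter (fun h => z ∈ σ h (x t)), w t h
      ≤ ∑ h ∈ Finset.univ.filter (fun h => yhat t ∈ σ h (x t)), w t h)
    (hupd : ∀ t h, w (t + 1) h = if y t ∉ σ h (x t) then 0
      else if yhat t ∈ σ h (x t) then w t h else 2 * w t h)
    (hstar : H) (hreal : ∀ t, y t ∈ σ hstar (x t))
    (T : ℕ) :
    (((Finset.range T).filter (fun t => yhat t ∉ σ hstar (x t))).card : ℝ)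
      ≤ Real.logb 2 (Fintype.card H) := by
  classical
  -- weights are nonnegative
  have hnn : ∀ t h, 0 ≤ w t h := by
    intro t
    induction t with
    | zero => intro h; rw [hw1]; norm_num
    | succ t ih =>
      intro h
      rw [hupd]
      split_ifs with h1 h2 <;>
        first
        | exact le_refl 0
        | exact ih h
        | linarith [ih h]
  -- total weight is nonincreasing
  have hW : ∀ t, ∑ h, w (t + 1) h ≤ ∑ h, w t h := by
    intro t
    have key : ∀ h, w (t + 1) h =
        (if y t ∈ σ h (x t) then w t h else 0)
        + (if y t ∈ σ h (x t) ∧ yhat t ∉ σ h (x t) then w t h else 0) := by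
      intro h
      rw [hupd]
      by_cases h1 : y t ∈ σ h (x t) <;> by_cases h2 : yhat t ∈ σ h (x t) <;>
        simp [h1, h2] <;> ring
    have hm := hmax t (y t)
    rw [Finset.sum_filter, Finset.sum_filter] at hm
    -- split the y-consistent sum
    have split1 : ∀ h, (if y t ∈ σ h (x t) then w t h else 0)
        = (if y t ∈ σ h (x t) ∧ yhat t ∈ σ h (x t) then w t h else 0)
        + (if y t ∈ σ h (x t) ∧ yhat t ∉ σ h (x t) then w t h else 0) := by
      intro h
      by_cases h1 : y t ∈ σ h (x t) <;> by_cases h2 : yhat t ∈ σ h (x t) <;>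
        simp [h1, h2]
    have split2 : ∀ h, (if yhat t ∈ σ h (x t) then w t h else 0)
        = (if y t ∈ σ h (x t) ∧ yhat t ∈ σ h (x t) then w t h else 0)
        + (if yhat t ∈ σ h (x t) ∧ y t ∉ σ h (x t) then w t h else 0) := by
      intro h
      by_cases h1 : y t ∈ σ h (x t) <;> by_cases h2 : yhat t ∈ σ h (x t) <;>
        simp [h1, h2]
    simp only [split1, split2, Finset.sum_add_distrib] at hm
    have hm2 : (∑ h, (if y t ∈ σ h (x t) ∧ yhat t ∉ σ h (x t) then w t h else 0))
        ≤ ∑ h, (if yhat t ∈ σ h (x t) ∧ y t ∉ σ h (x t) then w t h else 0) := by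
      linarith
    calc ∑ h, w (t + 1) h
        = ∑ h, ((if y t ∈ σ h (x t) then w t h else 0)
            + (if y t ∈ σ h (x t) ∧ yhat t ∉ σ h (x t) then w t h else 0)) := by
          exact Finset.sum_congr rfl (fun h _ => key h)
      _ = (∑ h, (if y t ∈ σ h (x t) then w t h else 0))
            + ∑ h, (if y t ∈ σ h (x t) ∧ yhat t ∉ σ h (x t) then w t h else 0) := by
          rw [Finset.sum_add_distrib]
      _ ≤ (∑ h, (if y t ∈ σ h (x t) then w t h else 0))
            + ∑ h, (if yhat t ∈ σ h (x t) ∧ y t ∉ σ h (x t) then w t h else 0) := by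
          linarith
      _ = ∑ h, ((if y t ∈ σ h (x t) then w t h else 0)
            + (if yhat t ∈ σ h (x t) ∧ y t ∉ σ h (x t) then w t h else 0)) := by
          rw [Finset.sum_add_distrib]
      _ ≤ ∑ h, w t h := by
          apply Finset.sum_le_sum
          intro h _
          by_cases h1 : y t ∈ σ h (x t) <;> by_cases h2 : yhat t ∈ σ h (x t) <;>
            simp [h1, h2] <;> exact hnn t h
  have hWmono : ∀ t, ∑ h, w t h ≤ ∑ h, w 0 h := by
    intro t
    induction t with
    | zero => exact le_refl _
    | succ t ih => exact le_trans (hW t) ih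
  have hW0 : ∑ h, w 0 h = (Fintype.card H : ℝ) := by
    simp [hw1, Finset.card_univ]
  -- weight of hstar
  have hws : ∀ t, w t hstar
      = 2 ^ (((Finset.range t).filter (fun s => yhat s ∉ σ hstar (x s))).card) := by
    intro t
    induction t with
    | zero => simp [hw1]
    | succ t ih =>
      rw [hupd, Finset.range_add_one, Finset.filter_insert]
      by_cases h2 : yhat t ∈ σ hstar (x t)
      · simp [hreal t, h2, ih]
      · have hni : t ∉ (Finset.range t).filter (fun s => yhat s ∉ σ hstar (x s)) := by
          simp
        rw [if_pos h2, Finset.card_insert_of_notMem hni]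
        simp [hreal t, h2, ih]
        ring
  -- combine
  set M := ((Finset.range T).filter (fun t => yhat t ∉ σ hstar (x t))).card with hM
  have h1 : (2 : ℝ) ^ M ≤ (Fintype.card H : ℝ) := by
    have := Finset.single_le_sum (f := w T) (fun h _ => hnn T h) (Finset.mem_univ hstar)
    rw [hws T] at this
    calc (2:ℝ) ^ M ≤ ∑ h, w T h := this
      _ ≤ ∑ h, w 0 h := hWmono T
      _ = _ := hW0
  have h2 : (M : ℝ) = Real.logb 2 ((2:ℝ) ^ M) := by
    rw [Real.logb_pow]
    simp
  rw [h2]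
  exact Real.logb_le_logb_of_le one_lt_two (by positivity) h1
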